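/- Let g be a complex semisimple Lie algebra, u in h a regular semisimple element of the Cartan subalgebra, n_- the negative nilradical, and N_- the corresponding unipotent subgroup of the adjoint group. Then for every nonzero scalar λ, the adjoint N_- orbit of λu equals the affine plane λu + n_-. -/

import Mathlib

section

variable {g : Type*} [LieRing g] [LieAlgebra ℂ g] [Module.Finite ℂ g]
  [LieAlgebra.IsKilling ℂ g] [LieAlgebra.IsSemisimple ℂ g]

/-- The exponential of `ad z` (a finite sum since `ad z` is nilpotent on a
finite-dimensional algebra): the typical element of the unipotent group `N_-` is
`exp (ad z)` for `z ∈ n_-`. -/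
noncomputable def expAd (z : g) : Module.End ℂ g :=
  ∑ k ∈ Finset.range (Module.finrank ℂ g + 1),
    ((k.factorial : ℂ)⁻¹ • (LieAlgebra.ad ℂ g z : Module.End ℂ g) ^ k)

set_option linter.unusedSectionVars false in
/-- Auxiliary descending chain of submodules: iterated brackets with `Nneg`. -/
def auxChain (Nneg : Submodule ℂ g) : ℕ → Submodule ℂ g
  | 0 => Nneg
  | (k+1) => Submodule.span ℂ {x | ∃ a ∈ Nneg, ∃ b ∈ auxChain Nneg k, x = ⁅a, b⁆}

set_option linter.unusedSectionVars false in
lemma lie_mem_auxChain {Nneg : Submodule ℂ g} (k : ℕ) {a b : g} (ha : a ∈ Nneg)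
    (hb : b ∈ auxChain Nneg k) : ⁅a, b⁆ ∈ auxChain Nneg (k + 1) :=
  Submodule.subset_span ⟨a, ha, b, hb, rfl⟩

set_option linter.unusedSectionVars false in
lemma auxChain_le {Nneg : Submodule ℂ g} (hbr : ∀ x ∈ Nneg, ∀ y ∈ Nneg, ⁅x, y⁆ ∈ Nneg) :
    ∀ k, auxChain Nneg k ≤ Nneg
  | 0 => le_rfl
  | (k+1) => by
      refine Submodule.span_le.2 ?_
      rintro x ⟨a, ha, b, hb, rfl⟩
      exact hbr a ha b (auxChain_le hbr k hb)

set_option linter.unusedSectionVars false in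
lemma auxChain_succ_le {Nneg : Submodule ℂ g} (hbr : ∀ x ∈ Nneg, ∀ y ∈ Nneg, ⁅x, y⁆ ∈ Nneg) :
    ∀ k, auxChain Nneg (k + 1) ≤ auxChain Nneg k
  | 0 => auxChain_le hbr 1
  | (k+1) => by
      refine Submodule.span_le.2 ?_
      rintro x ⟨a, ha, b, hb, rfl⟩
      exact lie_mem_auxChain k ha (auxChain_succ_le hbr k hb)

set_option linter.unusedSectionVars false in
lemma lie_u_mem_auxChain {H Nneg : Submodule ℂ g}
    (hHN : ∀ x ∈ H, ∀ y ∈ Nneg, ⁅x, y⁆ ∈ Nneg) {u : g} (hu : u ∈ H) :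
    ∀ k, ∀ x ∈ auxChain Nneg k, ⁅u, x⁆ ∈ auxChain Nneg k
  | 0 => fun x hx => hHN u hu x hx
  | (k+1) => fun x hx => by
      induction hx using Submodule.span_induction with
      | mem y hy =>
          obtain ⟨a, ha, b, hb, rfl⟩ := hy
          rw [leibniz_lie]
          exact add_mem (lie_mem_auxChain k (hHN u hu a ha) hb)
            (lie_mem_auxChain k ha (lie_u_mem_auxChain hHN hu k b hb))
      | zero => simp
      | add y z _ _ hy hz => rw [lie_add]; exact add_mem hy hz
      | smul t y _ hy => rw [lie_smul]; exact Submodule.smul_mem _ t hy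

set_option linter.unusedSectionVars false in
lemma auxChain_eventually_bot {Nneg : Submodule ℂ g}
    (hbr : ∀ x ∈ Nneg, ∀ y ∈ Nneg, ⁅x, y⁆ ∈ Nneg)
    (hnil : ∀ z ∈ Nneg, IsNilpotent (LieAlgebra.ad ℂ g z : Module.End ℂ g)) :
    ∃ K, auxChain Nneg K = ⊥ := by
  let Nl : LieSubalgebra ℂ g :=
    { toSubmodule := Nneg
      lie_mem' := fun {x y} hx hy => hbr x hx y hy }
  have key : ∀ x : Nl, IsNilpotent (LieAlgebra.ad ℂ Nl x) := by
    intro x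
    obtain ⟨n, hn⟩ := hnil (x : g) x.2
    refine ⟨n, ?_⟩
    ext y
    have : ∀ m : ℕ, (((LieAlgebra.ad ℂ Nl x ^ m) y : Nl) : g)
        = (LieAlgebra.ad ℂ g (x : g) ^ m) (y : g) := by
      intro m
      induction m with
      | zero => simp
      | succ m ih => rw [pow_succ', pow_succ']; simp [LieAlgebra.ad_apply, ih]
    have h0 := this n
    rw [hn] at h0
    simpa using Subtype.ext h0
  have : IsNoetherian ℂ Nl := by infer_instance
  have hNilp : LieRing.IsNilpotent Nl := (LieAlgebra.isNilpotent_iff_forall (R := ℂ)).2 key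
  obtain ⟨K, hK⟩ := LieModule.IsNilpotent.nilpotent ℂ Nl Nl
  refine ⟨K, ?_⟩
  have hle : ∀ k, auxChain Nneg k ≤
      Submodule.map (Nl.toSubmodule.subtype)
        (LieModule.lowerCentralSeries ℂ Nl Nl k).toSubmodule := by
    intro k
    induction k with
    | zero =>
        intro x hx
        exact ⟨⟨x, hx⟩, by simp, rfl⟩
    | succ k ih =>
        refine Submodule.span_le.2 ?_
        rintro x ⟨a, ha, b, hb, rfl⟩
        obtain ⟨b', hb', rfl⟩ := ih hb
        refine ⟨⁅(⟨a, ha⟩ : Nl), b'⁆, ?_, rfl⟩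
        rw [LieModule.lowerCentralSeries_succ]
        exact LieSubmodule.lie_mem_lie (LieSubmodule.mem_top _) hb'
  have := hle K
  rw [hK] at this
  simpa using le_bot_iff.mp (by simpa using this)

set_option linter.unusedSectionVars false in
/-- The map `s ↦ ⁅u, s⁆` is surjective on any submodule of `Nneg` which it preserves. -/
lemma exists_lie_u_eq {H Nneg S : Submodule ℂ g} (hdisj : H ⊓ Nneg = ⊥)
    {u : g} (hreg : LinearMap.ker (LieAlgebra.ad ℂ g u : Module.End ℂ g) = H)
    (hSN : S ≤ Nneg) (hS : ∀ s ∈ S, ⁅u, s⁆ ∈ S) {m : g} (hm : m ∈ S) :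
    ∃ δ ∈ S, ⁅u, δ⁆ = m := by
  have hmap : ∀ s ∈ S, (LieAlgebra.ad ℂ g u : Module.End ℂ g) s ∈ S := by
    intro s hs; simpa [LieAlgebra.ad_apply] using hS s hs
  set f := (LieAlgebra.ad ℂ g u : Module.End ℂ g).restrict hmap with hf
  have hinj : Function.Injective f := by
    rw [← LinearMap.ker_eq_bot]
    rw [Submodule.eq_bot_iff]
    rintro ⟨s, hs⟩ hks
    have h0 : (LieAlgebra.ad ℂ g u : Module.End ℂ g) s = 0 := by
      have := congrArg (Subtype.val) hks
      simpa [hf, LinearMap.restrict_apply] using this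
    have hsH : s ∈ H := hreg ▸ LinearMap.mem_ker.2 h0
    have : s ∈ H ⊓ Nneg := ⟨hsH, hSN hs⟩
    rw [hdisj] at this
    exact Subtype.ext (by simpa using this)
  have hsurj : Function.Surjective f := by
    have : FiniteDimensional ℂ S := inferInstance
    exact (LinearMap.injective_iff_surjective).1 hinj
  obtain ⟨⟨δ, hδ⟩, hfd⟩ := hsurj ⟨m, hm⟩
  refine ⟨δ, hδ, ?_⟩
  have := congrArg (Subtype.val) hfd
  simpa [hf, LinearMap.restrict_apply, LieAlgebra.ad_apply] using this

set_option linter.unusedSectionVars false in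
lemma expAd_zero_apply (v : g) : expAd (0 : g) v = v := by
  unfold expAd
  rw [LinearMap.sum_apply]
  rw [Finset.sum_range_succ']
  simp [zero_pow, Nat.succ_ne_zero]

set_option linter.unusedSectionVars false in
lemma adpow_smul_mem {H Nneg : Submodule ℂ g}
    (hbr : ∀ x ∈ Nneg, ∀ y ∈ Nneg, ⁅x, y⁆ ∈ Nneg)
    (hHN : ∀ x ∈ H, ∀ y ∈ Nneg, ⁅x, y⁆ ∈ Nneg)
    {u : g} (hu : u ∈ H) (c : ℂ) {z : g} (hz : z ∈ Nneg) :
    ∀ j, ((LieAlgebra.ad ℂ g z : Module.End ℂ g) ^ (j + 1)) (c • u) ∈ Nneg := by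
  have hAv : (LieAlgebra.ad ℂ g z : Module.End ℂ g) (c • u) ∈ Nneg := by
    have h1 : (LieAlgebra.ad ℂ g z : Module.End ℂ g) (c • u) = c • ⁅z, u⁆ := by
      rw [map_smul, LieAlgebra.ad_apply]
    rw [h1, ← lie_skew, smul_neg]
    exact neg_mem (Submodule.smul_mem _ _ (hHN u hu z hz))
  intro j
  induction j with
  | zero => rw [zero_add, pow_one]; exact hAv
  | succ j ih =>
      rw [pow_succ', Module.End.mul_apply]
      exact hbr z hz _ ih

set_option linter.unusedSectionVars false in
lemma expAd_apply_sub_mem {H Nneg : Submodule ℂ g}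
    (hbr : ∀ x ∈ Nneg, ∀ y ∈ Nneg, ⁅x, y⁆ ∈ Nneg)
    (hHN : ∀ x ∈ H, ∀ y ∈ Nneg, ⁅x, y⁆ ∈ Nneg)
    {u : g} (hu : u ∈ H) (c : ℂ) {z : g} (hz : z ∈ Nneg) :
    expAd z (c • u) - c • u ∈ Nneg := by
  unfold expAd
  rw [LinearMap.sum_apply, Finset.sum_range_succ']
  have h0 : (((Nat.factorial 0 : ℂ))⁻¹ •
      (LieAlgebra.ad ℂ g z : Module.End ℂ g) ^ 0) (c • u) = c • u := by
    simp
  rw [h0, add_sub_cancel_right]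
  refine Submodule.sum_mem _ fun j _ => ?_
  rw [LinearMap.smul_apply]
  exact Submodule.smul_mem _ _ (adpow_smul_mem hbr hHN hu c hz j)

set_option linter.unusedSectionVars false in
/-- Key perturbation estimate: changing `z` by `δ ∈ auxChain k` changes `expAd z (c • u)`
by `⁅δ, c • u⁆` modulo `auxChain (k+1)`. -/
lemma expAd_perturb {H Nneg : Submodule ℂ g}
    (hbr : ∀ x ∈ Nneg, ∀ y ∈ Nneg, ⁅x, y⁆ ∈ Nneg)
    (hHN : ∀ x ∈ H, ∀ y ∈ Nneg, ⁅x, y⁆ ∈ Nneg)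
    {u : g} (hu : u ∈ H) (c : ℂ)
    {z δ : g} (hz : z ∈ Nneg) {k : ℕ} (hδ : δ ∈ auxChain Nneg k)
    (hrank : 1 ≤ Module.finrank ℂ g) :
    expAd (z + δ) (c • u) - expAd z (c • u) - ⁅δ, c • u⁆ ∈ auxChain Nneg (k + 1) := by
  set A := (LieAlgebra.ad ℂ g z : Module.End ℂ g) with hA
  set B := (LieAlgebra.ad ℂ g δ : Module.End ℂ g) with hB
  have hδN : δ ∈ Nneg := auxChain_le hbr k hδ
  set v := c • u with hv
  have hAmem : ∀ x ∈ Nneg, A x ∈ Nneg := fun x hx => hbr z hz x hx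
  have hAv : A v ∈ Nneg := by
    have h1 : A v = c • ⁅z, u⁆ := by
      rw [hA, hv, map_smul, LieAlgebra.ad_apply]
    rw [h1, ← lie_skew, smul_neg]
    exact neg_mem (Submodule.smul_mem _ _ (hHN u hu z hz))
  have hApow : ∀ j, (A ^ (j + 1)) v ∈ Nneg := by
    intro j
    induction j with
    | zero => rw [zero_add, pow_one]; exact hAv
    | succ j ih => rw [pow_succ', Module.End.mul_apply]; exact hAmem _ ih
  have hBv : B v ∈ auxChain Nneg k := by
    have h1 : B v = c • ⁅δ, u⁆ := by
      rw [hB, hv, map_smul, LieAlgebra.ad_apply]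
    rw [h1, ← lie_skew, smul_neg]
    exact neg_mem (Submodule.smul_mem _ _ (lie_u_mem_auxChain hHN hu k δ hδ))
  have hBN : ∀ x ∈ Nneg, B x ∈ auxChain Nneg (k + 1) := by
    intro x hx
    rw [hB, LieAlgebra.ad_apply, ← lie_skew]
    exact neg_mem (lie_mem_auxChain k hx hδ)
  have hAc' : ∀ x ∈ auxChain Nneg (k + 1), A x ∈ auxChain Nneg (k + 1) := by
    intro x hx
    rw [hA, LieAlgebra.ad_apply]
    exact auxChain_succ_le hbr (k + 1) (lie_mem_auxChain (k + 1) hz hx)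
  set E : ℕ → g := fun j => ((A + B) ^ j) v - (A ^ j) v with hE
  have hrec : ∀ j, E (j + 1) = (A + B) (E j) + B ((A ^ j) v) := by
    intro j
    have h1 : ((A + B) ^ (j + 1)) v = (A + B) (((A + B) ^ j) v) := by
      rw [pow_succ', Module.End.mul_apply]
    have h2 : (A ^ (j + 1)) v = A ((A ^ j) v) := by
      rw [pow_succ', Module.End.mul_apply]
    have h3 : ((A + B) ^ j) v = E j + (A ^ j) v := (sub_add_cancel _ _).symm
    show ((A + B) ^ (j + 1)) v - (A ^ (j + 1)) v = (A + B) (E j) + B ((A ^ j) v)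
    simp only [h1, h2, h3, map_add, LinearMap.add_apply]
    abel
  have hE0 : E 0 = 0 := by simp [hE]
  have hE1 : E 1 = B v := by
    rw [hrec 0, hE0, map_zero, zero_add, pow_zero, Module.End.one_apply]
  have hEN : ∀ j, E j ∈ Nneg := by
    intro j
    induction j with
    | zero => rw [hE0]; exact zero_mem _
    | succ j ih =>
        rw [hrec j, LinearMap.add_apply]
        refine add_mem (add_mem (hAmem _ ih) (auxChain_le hbr (k+1) (hBN _ ih))) ?_
        cases j with
        | zero => exact auxChain_le hbr k (by simpa using hBv)
        | succ i => exact auxChain_le hbr (k+1) (hBN _ (hApow i))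
  have hE2 : ∀ j, E (j + 2) ∈ auxChain Nneg (k + 1) := by
    intro j
    induction j with
    | zero =>
        rw [hrec 1, hE1, LinearMap.add_apply]
        refine add_mem (add_mem ?_ ?_) ?_
        · rw [hA, LieAlgebra.ad_apply]
          exact lie_mem_auxChain k hz hBv
        · exact hBN _ (auxChain_le hbr k hBv)
        · exact hBN _ (by rw [pow_one]; exact hAv)
    | succ j ih =>
        rw [show j + 1 + 2 = (j + 2) + 1 by ring, hrec (j + 2), LinearMap.add_apply]
        exact add_mem (add_mem (hAc' _ ih) (hBN _ (auxChain_le hbr (k+1) ih)))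
          (hBN _ (hApow (j + 1)))
  -- now the sum
  obtain ⟨n, hn⟩ : ∃ n, Module.finrank ℂ g = n + 1 :=
    ⟨Module.finrank ℂ g - 1, (Nat.succ_pred_eq_of_pos hrank).symm⟩
  have hadd : (LieAlgebra.ad ℂ g (z + δ) : Module.End ℂ g) = A + B := by
    simp [hA, hB, map_add]
  have hdiff : expAd (z + δ) v - expAd z v
      = ∑ j ∈ Finset.range (Module.finrank ℂ g + 1), (j.factorial : ℂ)⁻¹ • E j := by
    unfold expAd
    rw [hadd, LinearMap.sum_apply, LinearMap.sum_apply, ← Finset.sum_sub_distrib]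
    refine Finset.sum_congr rfl fun j _ => ?_
    simp [hE, hA, smul_sub]
  have hBveq : B v = ⁅δ, v⁆ := by simp [hB, LieAlgebra.ad_apply]
  rw [hdiff, ← hBveq, ← hE1, hn]
  rw [Finset.sum_range_succ', Finset.sum_range_succ']
  have hf0 : ((Nat.factorial 0 : ℂ))⁻¹ • E 0 = 0 := by simp [hE0]
  have hf1 : ((Nat.factorial 1 : ℂ))⁻¹ • E 1 = E 1 := by simp
  rw [hf0, hf1, add_zero]
  have : ∑ j ∈ Finset.range n, ((Nat.factorial (j + 1 + 1) : ℂ))⁻¹ • E (j + 1 + 1) + E 1 - E 1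
      = ∑ j ∈ Finset.range n, ((Nat.factorial (j + 1 + 1) : ℂ))⁻¹ • E (j + 1 + 1) := by abel
  rw [this]
  exact Submodule.sum_mem _ fun j _ => Submodule.smul_mem _ _ (hE2 j)

/-- Let `u ∈ h` be regular (its centralizer is `h`) and `n_-` the negative
nilradical, `N_- = exp(ad n_-)` the corresponding unipotent group.  Then for every nonzero
scalar `c`, the adjoint `N_-` orbit of `c • u` equals the affine plane `c • u + n_-`. -/
theorem unipotent_orbit_of_regular_semisimple_eq_affine_plane
    (H Nneg : Submodule ℂ g)
    (hHCartan : ∃ (Hl : LieSubalgebra ℂ g), Hl.IsCartanSubalgebra ∧ Hl.toSubmodule = H)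
    -- `n_-` is a nilpotent subalgebra normalized by `h`
    (hbr : ∀ x ∈ Nneg, ∀ y ∈ Nneg, ⁅x, y⁆ ∈ Nneg)
    (hHN : ∀ x ∈ H, ∀ y ∈ Nneg, ⁅x, y⁆ ∈ Nneg)
    (hnil : ∀ z ∈ Nneg, IsNilpotent (LieAlgebra.ad ℂ g z : Module.End ℂ g))
    (hdisj : H ⊓ Nneg = ⊥)
    (u : g) (hu : u ∈ H)
    -- `u` is regular: no root vanishes on `u`, i.e. its centralizer is exactly `h`
    (hreg : LinearMap.ker (LieAlgebra.ad ℂ g u : Module.End ℂ g) = H)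
    (c : ℂ) (hc : c ≠ 0) :
    {v : g | ∃ z ∈ Nneg, v = expAd z (c • u)} = {v : g | ∃ m ∈ Nneg, v = c • u + m} := by
  by_cases hrank : Module.finrank ℂ g = 0
  · have : Subsingleton g := Module.finrank_zero_iff.mp hrank
    ext v
    constructor
    · intro _; exact ⟨0, zero_mem _, Subsingleton.elim _ _⟩
    · intro _; exact ⟨0, zero_mem _, Subsingleton.elim _ _⟩
  have hrank1 : 1 ≤ Module.finrank ℂ g := Nat.pos_of_ne_zero hrank
  ext v
  simp only [Set.mem_setOf_eq]
  constructor
  · rintro ⟨z, hz, rfl⟩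
    refine ⟨expAd z (c • u) - c • u, expAd_apply_sub_mem hbr hHN hu c hz, ?_⟩
    abel
  · rintro ⟨m, hm, rfl⟩
    have key : ∀ k, ∃ z ∈ Nneg, c • u + m - expAd z (c • u) ∈ auxChain Nneg k := by
      intro k
      induction k with
      | zero =>
          refine ⟨0, zero_mem _, ?_⟩
          rw [expAd_zero_apply]
          have h1 : c • u + m - c • u = m := by abel
          rw [h1]
          exact hm
      | succ k ih =>
          obtain ⟨z, hz, he⟩ := ih
          obtain ⟨δ, hδ, hδe⟩ := exists_lie_u_eq hdisj hreg (auxChain_le hbr k)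
            (lie_u_mem_auxChain hHN hu k)
            (Submodule.smul_mem _ (-c⁻¹) he)
          have hbe : ⁅δ, c • u⁆ = c • u + m - expAd z (c • u) := by
            rw [lie_smul, ← lie_skew, hδe]
            simp [smul_smul, mul_inv_cancel₀ hc]
          have hp := expAd_perturb hbr hHN hu c hz hδ hrank1
          refine ⟨z + δ, add_mem hz (auxChain_le hbr k hδ), ?_⟩
          have heq : c • u + m - expAd (z + δ) (c • u)
              = -(expAd (z + δ) (c • u) - expAd z (c • u) - ⁅δ, c • u⁆)
                - (⁅δ, c • u⁆ - (c • u + m - expAd z (c • u))) := by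
            abel
          have hz0 : ⁅δ, c • u⁆ - (c • u + m - expAd z (c • u)) = 0 := by
            rw [hbe, sub_self]
          rw [heq, hz0, sub_zero]
          exact neg_mem hp
    obtain ⟨K, hK⟩ := auxChain_eventually_bot hbr hnil
    obtain ⟨z, hz, he⟩ := key K
    rw [hK, Submodule.mem_bot, sub_eq_zero] at he
    exact ⟨z, hz, he⟩

end
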